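/- Under the density ratio model (G_0, …, G_m Borel probability measures on ℝ; q : ℝ → ℝ^d Borel measurable with first component q_1 ≡ 1; θ_0 = 0, θ_1, …, θ_m ∈ ℝ^d; G_k with density exp(θ_kᵀ q(·)) with respect to G_0; ρ_0, …, ρ_m > 0, Σ ρ_k = 1; h = Σ_k ρ_k exp(θ_kᵀ q), h_k = ρ_k exp(θ_kᵀ q)/h; Ḡ = Σ_k ρ_k G_k; ∫ ‖q‖² dḠ < ∞), let W be the md × md block matrix with blocks W_{rs} = ∫ (δ_{rs} h_r − h_r h_s) q qᵀ dḠ (1 ≤ r, s ≤ m), assumed invertible. For 0 ≤ r ≤ m and x ∈ ℝ let B_r(x) ∈ ℝ^{md} have sth block B_{r,s}(x) = ∫_{(−∞,x]} (δ_{rs} h_r − h_r h_s) q dḠ (1 ≤ s ≤ m), write B_k = B_k(+∞), and let c_{rk}(x) = ∫_{(−∞,x]} h_r h_k dḠ. Then for every 0 ≤ r, k ≤ m and every x ∈ ℝ: B_r(x)ᵀ W^{-1} B_k = δ_{rk} ρ_r G_r((−∞,x]) − c_{rk}(x). In particular, for r ≥ 1, c_{r0}(x) + B_r(x)ᵀ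 W^{-1} B_0 = 0. -/

import Mathlib

open MeasureTheory

/-- in the density ratio model with `q₁ ≡ 1`, `∫ ‖q‖² dḠ < ∞` and `W`
invertible, `B_r(x)ᵀ W⁻¹ B_k = δ_{rk} ρ_r G_r((-∞,x]) - c_{rk}(x)` for all `0 ≤ r,k ≤ m`
and all real `x`; in particular `c_{r0}(x) + B_r(x)ᵀ W⁻¹ B_0 = 0` for `r ≥ 1`. -/
theorem drm_B_Winv_B_identity (m d : ℕ) (hm : 1 ≤ m) (hd : 1 ≤ d)
    (G : Fin (m + 1) → Measure ℝ) [∀ k, IsProbabilityMeasure (G k)]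
    (q : ℝ → Fin d → ℝ) (hq : Measurable q)
    (hq1 : ∀ t, q t ⟨0, hd⟩ = 1)
    (θ : Fin (m + 1) → Fin d → ℝ) (hθ0 : θ 0 = 0)
    (hG : ∀ k, G k =
      (G 0).withDensity fun t => ENNReal.ofReal (Real.exp (∑ i, θ k i * q t i)))
    (ρ : Fin (m + 1) → ℝ) (hρpos : ∀ k, 0 < ρ k) (hρsum : ∑ k, ρ k = 1)
    (hfun : Fin (m + 1) → ℝ → ℝ)
    (hhfun : ∀ k t, hfun k t =
      ρ k * Real.exp (∑ i, θ k i * q t i) /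
        ∑ k', ρ k' * Real.exp (∑ i, θ k' i * q t i))
    (Gbar : Measure ℝ) (hGbar : Gbar = ∑ k, ENNReal.ofReal (ρ k) • G k)
    (hq2int : Integrable (fun t => ∑ i, (q t i) ^ 2) Gbar)
    (W : Matrix (Fin m × Fin d) (Fin m × Fin d) ℝ)
    (hW : ∀ (r s : Fin m) (i j : Fin d), W (r, i) (s, j) =
      ∫ t, ((if r = s then hfun r.succ t else 0) - hfun r.succ t * hfun s.succ t) *
        (q t i * q t j) ∂Gbar)
    (hWinv : IsUnit W.det)
    (B : Fin (m + 1) → ℝ → Fin m × Fin d → ℝ)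
    (hB : ∀ (r : Fin (m + 1)) (x : ℝ) (s : Fin m) (i : Fin d), B r x (s, i) =
      ∫ t in Set.Iic x,
        ((if r = s.succ then hfun r t else 0) - hfun r t * hfun s.succ t) * q t i ∂Gbar)
    (Bfull : Fin (m + 1) → Fin m × Fin d → ℝ)
    (hBfull : ∀ (k : Fin (m + 1)) (s : Fin m) (i : Fin d), Bfull k (s, i) =
      ∫ t, ((if k = s.succ then hfun k t else 0) - hfun k t * hfun s.succ t) * q t i ∂Gbar) :
    (∀ (r k : Fin (m + 1)) (x : ℝ),
      ∑ a : Fin m × Fin d, B r x a * (W⁻¹).mulVec (Bfull k) a =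
        (if r = k then ρ r * (G r (Set.Iic x)).toReal else 0) -
          ∫ t in Set.Iic x, hfun r t * hfun k t ∂Gbar) ∧
    (∀ (r : Fin m) (x : ℝ),
      (∫ t in Set.Iic x, hfun r.succ t * hfun 0 t ∂Gbar) +
        ∑ a : Fin m × Fin d, B r.succ x a * (W⁻¹).mulVec (Bfull 0) a = 0) := by
  -- abbreviations
  obtain ⟨E, hEd⟩ : ∃ E : Fin (m+1) → ℝ → ℝ,
      ∀ k t, E k t = Real.exp (∑ i, θ k i * q t i) := ⟨_, fun _ _ => rfl⟩
  obtain ⟨S, hSd⟩ : ∃ S : ℝ → ℝ, ∀ t, S t = ∑ k', ρ k' * E k' t :=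
    ⟨_, fun _ => rfl⟩
  have hSpos : ∀ t, 0 < S t := fun t => by
    rw [hSd]
    exact Finset.sum_pos (fun k _ => mul_pos (hρpos k) (by rw [hEd]; exact Real.exp_pos _))
      Finset.univ_nonempty
  have hhfun' : ∀ k t, hfun k t = ρ k * E k t / S t := by
    intro k t; rw [hhfun, hEd, hSd]
    congr 1
    exact Finset.sum_congr rfl fun k' _ => by rw [hEd]
  have hfun_nonneg : ∀ k t, 0 ≤ hfun k t := fun k t => by
    rw [hhfun' k t]
    exact div_nonneg (mul_nonneg (hρpos k).le (by rw [hEd]; positivity)) (hSpos t).le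
  have hfun_sum : ∀ t, ∑ k, hfun k t = 1 := fun t => by
    have : ∑ k, hfun k t = (∑ k, ρ k * E k t) / S t := by
      rw [Finset.sum_div]
      exact Finset.sum_congr rfl fun k _ => hhfun' k t
    rw [this, ← hSd t, div_self (hSpos t).ne']
  have hfun_le_one : ∀ k t, hfun k t ≤ 1 := fun k t => by
    rw [← hfun_sum t]
    exact Finset.single_le_sum (fun k' _ => hfun_nonneg k' t) (Finset.mem_univ k)
  -- measurability
  have hqi : ∀ i, Measurable fun t => q t i := fun i => (measurable_pi_apply i).comp hq
  have hEm : ∀ k, Measurable (E k) := fun k => by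
    have : E k = fun t => Real.exp (∑ i, θ k i * q t i) := funext (hEd k)
    rw [this]
    exact Real.measurable_exp.comp (Finset.measurable_sum _ fun i _ => (hqi i).const_mul _)
  have hSm : Measurable S := by
    have : S = fun t => ∑ k', ρ k' * E k' t := funext hSd
    rw [this]
    exact Finset.measurable_sum _ fun k _ => (hEm k).const_mul _
  have hhm : ∀ k, Measurable (hfun k) := fun k => by
    have : hfun k = fun t => ρ k * E k t / S t := funext (hhfun' k)
    rw [this]
    exact (((hEm k).const_mul _).div hSm)
  -- Gbar is a probability measure
  have hGbarP : IsProbabilityMeasure Gbar := by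
    constructor
    rw [hGbar, Measure.finset_sum_apply]
    simp only [Measure.smul_apply, measure_univ, smul_eq_mul, mul_one]
    rw [← ENNReal.ofReal_sum_of_nonneg (fun k _ => (hρpos k).le), hρsum, ENNReal.ofReal_one]
  -- integrability
  have hbd : Integrable (fun t => 1 + ∑ j, q t j ^ 2) Gbar := (integrable_const 1).add hq2int
  have hsq : ∀ t i, q t i ^ 2 ≤ ∑ j, q t j ^ 2 := fun t i =>
    Finset.single_le_sum (f := fun j => q t j ^ 2) (fun j _ => sq_nonneg _) (Finset.mem_univ i)
  have hQint : ∀ i, Integrable (fun t => q t i) Gbar := fun i =>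
    hbd.mono' (hqi i).aestronglyMeasurable (ae_of_all _ fun t => by
      have h1 := hsq t i
      rw [Real.norm_eq_abs]
      nlinarith [sq_abs (q t i), abs_nonneg (q t i), sq_nonneg (|q t i| - 1)])
  have hQQint : ∀ i j, Integrable (fun t => q t i * q t j) Gbar := fun i j =>
    hbd.mono' ((hqi i).mul (hqi j)).aestronglyMeasurable (ae_of_all _ fun t => by
      have h1 := hsq t i
      have h2 := hsq t j
      rw [Real.norm_eq_abs, abs_mul]
      nlinarith [sq_abs (q t i), sq_abs (q t j), abs_nonneg (q t i), abs_nonneg (q t j),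
        sq_nonneg (|q t i| - |q t j|)])
  have hIh : ∀ a, Integrable (hfun a) Gbar := fun a =>
    (integrable_const (1:ℝ)).mono' (hhm a).aestronglyMeasurable (ae_of_all _ fun t => by
      rw [Real.norm_eq_abs, abs_of_nonneg (hfun_nonneg a t)]; exact hfun_le_one a t)
  have hIhh : ∀ a b, Integrable (fun t => hfun a t * hfun b t) Gbar := fun a b =>
    (hIh b).bdd_mul (c := 1) (hhm a).aestronglyMeasurable (ae_of_all _ fun t => by
      rw [Real.norm_eq_abs, abs_of_nonneg (hfun_nonneg a t)]; exact hfun_le_one a t)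
  have hIker : ∀ (P : Prop) [Decidable P] (a b : Fin (m+1)) (f : ℝ → ℝ),
      Measurable f → Integrable f Gbar →
      Integrable (fun t => ((if P then hfun a t else 0) - hfun a t * hfun b t) * f t) Gbar := by
    intro P _ a b f hmf hint
    apply hint.bdd_mul (c := 2)
    · apply Measurable.aestronglyMeasurable
      refine Measurable.sub ?_ ((hhm a).mul (hhm b))
      by_cases hP : P
      · simp only [if_pos hP]; exact hhm a
      · simp only [if_neg hP]; exact measurable_const
    · refine ae_of_all _ fun t => ?_
      rw [Real.norm_eq_abs]
      have h1 := hfun_nonneg a t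
      have h2 := hfun_le_one a t
      have h3 := hfun_nonneg b t
      have h4 := hfun_le_one b t
      by_cases hP : P
      · rw [if_pos hP]
        rw [abs_le]; constructor <;> nlinarith
      · rw [if_neg hP]
        rw [abs_le]; constructor <;> nlinarith
  -- Gbar as density w.r.t. G 0
  have hGbarD : Gbar = (G 0).withDensity (fun t => ENNReal.ofReal (S t)) := by
    ext s hs
    rw [hGbar, Measure.finset_sum_apply, withDensity_apply _ hs]
    have : ∀ k : Fin (m+1), (ENNReal.ofReal (ρ k) • G k) s
        = ∫⁻ t in s, ENNReal.ofReal (ρ k * E k t) ∂(G 0) := by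
      intro k
      rw [Measure.smul_apply, hG k, withDensity_apply _ hs, smul_eq_mul,
        ← lintegral_const_mul _ (by
          exact ((Real.measurable_exp.comp
            (Finset.measurable_sum _ fun i _ => (hqi i).const_mul _))).ennreal_ofReal)]
      refine lintegral_congr fun t => ?_
      rw [← ENNReal.ofReal_mul (hρpos k).le, hEd]
    rw [Finset.sum_congr rfl fun k _ => this k, ← lintegral_finset_sum]
    · refine lintegral_congr fun t => ?_
      rw [hSd, ENNReal.ofReal_sum_of_nonneg]
      intro k _
      exact mul_nonneg (hρpos k).le (by rw [hEd]; positivity)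
    · intro k _
      exact (((hEm k).const_mul _).ennreal_ofReal)
  -- the key set-integral identity
  have hIic : ∀ (r : Fin (m+1)) (x : ℝ),
      ∫ t in Set.Iic x, hfun r t ∂Gbar = ρ r * (G r (Set.Iic x)).toReal := by
    intro r x
    rw [integral_eq_lintegral_of_nonneg_ae (ae_of_all _ fun t => hfun_nonneg r t)
      (hhm r).aestronglyMeasurable]
    rw [hGbarD, restrict_withDensity measurableSet_Iic,
      lintegral_withDensity_eq_lintegral_mul _ hSm.ennreal_ofReal (hhm r).ennreal_ofReal]
    have hpt : ∀ t, ((fun t => ENNReal.ofReal (S t)) * fun a => ENNReal.ofReal (hfun r a)) t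
        = ENNReal.ofReal (ρ r) * ENNReal.ofReal (E r t) := by
      intro t
      simp only [Pi.mul_apply]
      rw [← ENNReal.ofReal_mul (hSpos t).le, ← ENNReal.ofReal_mul (hρpos r).le]
      congr 1
      rw [hhfun' r t]
      field_simp
      rw [mul_assoc, mul_div_cancel_left₀ _ (hSpos t).ne']
    rw [lintegral_congr hpt, lintegral_const_mul _ (hEm r).ennreal_ofReal,
      ENNReal.toReal_mul, ENNReal.toReal_ofReal (hρpos r).le]
    congr 1
    rw [hG r, withDensity_apply _ measurableSet_Iic]
    congr 1
    refine lintegral_congr fun t => ?_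
    rw [hEd]
  -- matrix part
  have hBW : ∀ k' : Fin m, Bfull k'.succ = W.mulVec (Pi.single (k', (⟨0, hd⟩ : Fin d)) 1) := by
    intro k'
    funext a
    obtain ⟨s, i⟩ := a
    rw [Matrix.mulVec_single]
    show Bfull k'.succ (s, i) = W (s, i) (k', ⟨0, hd⟩) * 1
    rw [mul_one, hBfull, hW]
    refine integral_congr_ae (ae_of_all _ fun t => ?_)
    beta_reduce
    rw [hq1 t, mul_one]
    by_cases hs : s = k'
    · subst hs
      rw [if_pos rfl, if_pos rfl]
    · rw [if_neg (fun h => hs (Fin.succ_inj.mp h).symm), if_neg hs]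
      ring
  have hWinvB : ∀ k' : Fin m,
      (W⁻¹).mulVec (Bfull k'.succ) = Pi.single (k', (⟨0, hd⟩ : Fin d)) 1 := by
    intro k'
    rw [hBW k', Matrix.mulVec_mulVec, Matrix.nonsing_inv_mul W hWinv, Matrix.one_mulVec]
  have sumh : ∀ t, ∑ s : Fin m, hfun s.succ t = 1 - hfun 0 t := fun t => by
    have h1 := hfun_sum t
    rw [Fin.sum_univ_succ] at h1
    linarith
  have hB0 : Bfull 0 = W.mulVec (fun a : Fin m × Fin d =>
      if a.2 = (⟨0, hd⟩ : Fin d) then (-1 : ℝ) else 0) := by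
    funext a
    obtain ⟨s, i⟩ := a
    have hWcol : ∀ r : Fin m, W (s, i) (r, ⟨0, hd⟩) =
        ∫ t, ((if s = r then hfun s.succ t else 0) - hfun s.succ t * hfun r.succ t) * q t i ∂Gbar := by
      intro r
      rw [hW]
      refine integral_congr_ae (ae_of_all _ fun t => ?_)
      beta_reduce
      rw [hq1 t, mul_one]
    have hrhs : W.mulVec (fun a : Fin m × Fin d =>
        if a.2 = (⟨0, hd⟩ : Fin d) then (-1 : ℝ) else 0) (s, i)
        = - ∑ r : Fin m, W (s, i) (r, ⟨0, hd⟩) := by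
      show ∑ b : Fin m × Fin d, W (s, i) b * _ = _
      rw [Fintype.sum_prod_type]
      simp only [mul_ite, mul_neg_one, mul_zero]
      rw [← Finset.sum_neg_distrib]
      refine Finset.sum_congr rfl fun r _ => ?_
      simp [Finset.sum_ite_eq']
    have hptB : ∀ t, ∑ r : Fin m,
        ((if s = r then hfun s.succ t else 0) - hfun s.succ t * hfun r.succ t) * q t i
        = -(((if (0 : Fin (m+1)) = s.succ then hfun 0 t else 0) - hfun 0 t * hfun s.succ t)
            * q t i) := by
      intro t
      rw [← Finset.sum_mul, Finset.sum_sub_distrib, Finset.sum_ite_eq,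
        if_pos (Finset.mem_univ s), ← Finset.mul_sum, sumh t,
        if_neg (fun h => Fin.succ_ne_zero s h.symm)]
      ring
    rw [hrhs, hBfull]
    rw [Finset.sum_congr rfl fun r _ => hWcol r,
      ← integral_finset_sum _ (fun r _ => hIker _ _ _ (fun t => q t i) (hqi i) (hQint i)),
      ← integral_neg]
    refine integral_congr_ae (ae_of_all _ fun t => ?_)
    beta_reduce
    rw [hptB t, neg_neg]
  have hWinvB0 : (W⁻¹).mulVec (Bfull 0) = (fun a : Fin m × Fin d =>
      if a.2 = (⟨0, hd⟩ : Fin d) then (-1 : ℝ) else 0) := by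
    rw [hB0, Matrix.mulVec_mulVec, Matrix.nonsing_inv_mul W hWinv, Matrix.one_mulVec]
  -- main identity
  have key : ∀ (r k : Fin (m + 1)) (x : ℝ),
      ∑ a : Fin m × Fin d, B r x a * (W⁻¹).mulVec (Bfull k) a =
        (if r = k then ρ r * (G r (Set.Iic x)).toReal else 0) -
          ∫ t in Set.Iic x, hfun r t * hfun k t ∂Gbar := by
    intro r k x
    induction k using Fin.cases with
    | succ k' =>
      rw [hWinvB k']
      have hsum : ∑ a : Fin m × Fin d, B r x a *
          (Pi.single (k', (⟨0, hd⟩ : Fin d)) 1 : Fin m × Fin d → ℝ) a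
          = B r x (k', ⟨0, hd⟩) := by
        simp only [Pi.single_apply, mul_ite, mul_one, mul_zero]
        rw [Finset.sum_ite_eq']
        simp
      rw [hsum, hB]
      by_cases hr : r = k'.succ
      · have h1 : (fun t => ((if r = k'.succ then hfun r t else 0)
            - hfun r t * hfun k'.succ t) * q t ⟨0, hd⟩)
            = fun t => hfun r t - hfun r t * hfun k'.succ t :=
          funext fun t => by rw [if_pos hr, hq1 t, mul_one]
        rw [h1, integral_sub ((hIh r).restrict) ((hIhh r k'.succ).restrict),
          hIic r x, if_pos hr]
      · have h1 : (fun t => ((if r = k'.succ then hfun r t else 0)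
            - hfun r t * hfun k'.succ t) * q t ⟨0, hd⟩)
            = fun t => -(hfun r t * hfun k'.succ t) :=
          funext fun t => by rw [if_neg hr, hq1 t, mul_one]; ring
        rw [h1, integral_neg, if_neg hr]
        ring
    | zero =>
      rw [hWinvB0]
      have hsum : ∑ a : Fin m × Fin d, B r x a *
          (if a.2 = (⟨0, hd⟩ : Fin d) then (-1:ℝ) else 0)
          = - ∑ s : Fin m, B r x (s, ⟨0, hd⟩) := by
        rw [Fintype.sum_prod_type]
        simp only [mul_ite, mul_neg_one, mul_zero]
        rw [← Finset.sum_neg_distrib]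
        refine Finset.sum_congr rfl fun s _ => ?_
        simp [Finset.sum_ite_eq']
      rw [hsum]
      have hBs : ∀ s : Fin m, B r x (s, (⟨0, hd⟩ : Fin d)) = ∫ t in Set.Iic x,
          ((if r = s.succ then hfun r t else 0) - hfun r t * hfun s.succ t) ∂Gbar := by
        intro s
        rw [hB]
        refine integral_congr_ae (ae_of_all _ fun t => ?_)
        beta_reduce
        rw [hq1 t, mul_one]
      have hintr : ∀ s : Fin m, Integrable
          (fun t => (if r = s.succ then hfun r t else 0) - hfun r t * hfun s.succ t)
          (Gbar.restrict (Set.Iic x)) := by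
        intro s
        refine Integrable.sub ?_ ((hIhh r s.succ).restrict)
        by_cases hr : r = s.succ
        · simp only [if_pos hr]; exact (hIh r).restrict
        · simp only [if_neg hr]; exact integrable_zero _ _ _
      rw [Finset.sum_congr rfl fun s _ => hBs s, ← integral_finset_sum _ (fun s _ => hintr s)]
      by_cases hr0 : r = 0
      · subst hr0
        have hpt : (fun t => ∑ s : Fin m, ((if (0 : Fin (m+1)) = s.succ then hfun 0 t else 0)
            - hfun 0 t * hfun s.succ t)) = fun t => -(hfun 0 t - hfun 0 t * hfun 0 t) := by
          funext t
          rw [Finset.sum_sub_distrib]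
          have hz : ∀ s : Fin m, (if (0 : Fin (m+1)) = s.succ then hfun 0 t else 0) = 0 :=
            fun s => if_neg (fun h => Fin.succ_ne_zero s h.symm)
          rw [Finset.sum_congr rfl fun s _ => hz s, Finset.sum_const_zero,
            ← Finset.mul_sum, sumh t]
          ring
        rw [hpt, integral_neg, neg_neg,
          integral_sub ((hIh 0).restrict) ((hIhh 0 0).restrict), hIic 0 x, if_pos rfl]
      · obtain ⟨r', hr'⟩ : ∃ r' : Fin m, r'.succ = r := by
          rcases Fin.eq_succ_of_ne_zero hr0 with ⟨r', rfl⟩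
          exact ⟨r', rfl⟩
        have hpt : (fun t => ∑ s : Fin m, ((if r = s.succ then hfun r t else 0)
            - hfun r t * hfun s.succ t)) = fun t => hfun r t * hfun 0 t := by
          funext t
          rw [Finset.sum_sub_distrib]
          have h1 : ∑ s : Fin m, (if r = s.succ then hfun r t else 0) = hfun r t := by
            subst hr'
            simp only [Fin.succ_inj]
            rw [Finset.sum_ite_eq, if_pos (Finset.mem_univ r')]
          rw [h1, ← Finset.mul_sum, sumh t]
          ring
        rw [hpt, if_neg hr0]
        rw [← integral_neg]
        rw [zero_sub]
        rw [integral_neg]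
  refine ⟨key, fun r x => ?_⟩
  have h2 := key r.succ 0 x
  rw [if_neg (Fin.succ_ne_zero r)] at h2
  rw [h2]
  ring
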